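/- Let μ be a probability measure on a measurable space, let δ ∈ ℝ, and let r_w, r_l : Ω → ℝ be measurable functions such that -log σ(r_w - r_l), -log σ(r_w - δ), and -log σ(-(r_l - δ)) are all μ-integrable. Then the expected DPO loss is strictly less than the expected δ-shifted binary cross-entropy loss: ∫ (-log σ(r_w - r_l)) dμ < ∫ (-log σ(r_w - δ) - log σ(-(r_l - δ))) dμ, where σ(z) = 1/(1 + e^{-z}) is the logistic sigmoid function. -/

import Mathlib

open Real MeasureTheory

/-- The logistic sigmoid function `σ(z) = 1 / (1 + e^{-z})`. -/
noncomputable def logisticSigmoid (z : ℝ) : ℝ := 1 / (1 + Real.exp (-z))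

lemma logisticSigmoid_pos (z : ℝ) : 0 < logisticSigmoid z := by
  unfold logisticSigmoid
  positivity

lemma key_lt (x y : ℝ) :
    Real.log (logisticSigmoid x) + Real.log (logisticSigmoid y) <
      Real.log (logisticSigmoid (x + y)) := by
  rw [← Real.log_mul (logisticSigmoid_pos x).ne' (logisticSigmoid_pos y).ne']
  apply Real.log_lt_log (mul_pos (logisticSigmoid_pos x) (logisticSigmoid_pos y))
  unfold logisticSigmoid
  rw [div_mul_div_comm, one_mul]
  rw [div_lt_div_iff₀ (by positivity) (by positivity)]
  have hx := Real.exp_pos (-x)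
  have hy := Real.exp_pos (-y)
  have : Real.exp (-(x + y)) = Real.exp (-x) * Real.exp (-y) := by
    rw [← Real.exp_add]; ring_nf
  nlinarith [hx, hy]

theorem expected_dpo_loss_lt_expected_shifted_bce_loss
    {Ω : Type*} [MeasurableSpace Ω] (μ : Measure Ω) [IsProbabilityMeasure μ] (δ : ℝ)
    (r_w r_l : Ω → ℝ) (hw : Measurable r_w) (hl : Measurable r_l)
    (h₁ : Integrable (fun ω => -Real.log (logisticSigmoid (r_w ω - r_l ω))) μ)
    (h₂ : Integrable (fun ω => -Real.log (logisticSigmoid (r_w ω - δ))) μ)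
    (h₃ : Integrable (fun ω => -Real.log (logisticSigmoid (-(r_l ω - δ)))) μ) :
    ∫ ω, -Real.log (logisticSigmoid (r_w ω - r_l ω)) ∂μ <
      ∫ ω, (-Real.log (logisticSigmoid (r_w ω - δ)) -
        Real.log (logisticSigmoid (-(r_l ω - δ)))) ∂μ := by
  have hG : Integrable (fun ω => (-Real.log (logisticSigmoid (r_w ω - δ)) -
      Real.log (logisticSigmoid (-(r_l ω - δ))))) μ := by
    simpa [sub_eq_add_neg, Pi.add_def] using h₂.add h₃
  have hpt : ∀ ω, -Real.log (logisticSigmoid (r_w ω - r_l ω)) <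
      -Real.log (logisticSigmoid (r_w ω - δ)) -
        Real.log (logisticSigmoid (-(r_l ω - δ))) := by
    intro ω
    have := key_lt (r_w ω - δ) (-(r_l ω - δ))
    have h : r_w ω - δ + -(r_l ω - δ) = r_w ω - r_l ω := by ring
    rw [h] at this
    linarith
  have hdiff : Integrable (fun ω => (-Real.log (logisticSigmoid (r_w ω - δ)) -
      Real.log (logisticSigmoid (-(r_l ω - δ)))) -
      (-Real.log (logisticSigmoid (r_w ω - r_l ω)))) μ := hG.sub h₁
  have hpos : 0 < ∫ ω, ((-Real.log (logisticSigmoid (r_w ω - δ)) -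
      Real.log (logisticSigmoid (-(r_l ω - δ)))) -
      (-Real.log (logisticSigmoid (r_w ω - r_l ω)))) ∂μ := by
    rw [MeasureTheory.integral_pos_iff_support_of_nonneg_ae
      (Filter.Eventually.of_forall fun ω => (sub_pos.mpr (hpt ω)).le) hdiff]
    have : Function.support (fun ω => (-Real.log (logisticSigmoid (r_w ω - δ)) -
        Real.log (logisticSigmoid (-(r_l ω - δ)))) -
        (-Real.log (logisticSigmoid (r_w ω - r_l ω)))) = Set.univ := by
      ext ω
      simp only [Function.mem_support, Set.mem_univ, iff_true]
      exact (sub_pos.mpr (hpt ω)).ne'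
    rw [this]
    simp
  rw [MeasureTheory.integral_sub hG h₁] at hpos
  linarith
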